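/- Let G be a finite group of rank n, p a prime with rk_p(G) = n, and G_p a Sylow p-subgroup of G. Suppose there exists a nontrivial subgroup H ⊆ Z(G_p) that is strongly closed in G_p with respect to G. Then the character φ = Ind^{G_p}_{K}(ρ_K − 1_K), where K = Ω₁(H) and ρ_K is the regular character of K, satisfies: (1) φ respects fusion in G (φ(h) = φ(k) whenever h, k ∈ G_p are conjugate in G), and (2) for every elementary abelian subgroup E ⊆ G_p of rank n, the inner product [φ|_E, 1_E] = 0. -/

import Mathlib

open scoped Classical
open scoped Pointwise

/-- A subgroup is elementary abelian for the prime `p` if it is commutative and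
every element has order dividing `p`. -/
def IsElementaryAbelian (p : ℕ) {G : Type*} [Group G] (H : Subgroup G) : Prop :=
  (∀ x ∈ H, ∀ y ∈ H, x * y = y * x) ∧ ∀ x ∈ H, x ^ p = 1

/-- `Ω₁(H)`: the subgroup generated by the elements of `H` of order dividing `p`. -/
def Omega1 (p : ℕ) {G : Type*} [Group G] (H : Subgroup G) : Subgroup G :=
  Subgroup.closure {x : G | x ∈ H ∧ x ^ p = 1}

/-- The `p`-rank of a group. -/
noncomputable def pRank (p : ℕ) (G : Type*) [Group G] : ℕ :=
  sSup {n | ∃ E : Subgroup G, IsElementaryAbelian p E ∧ Nat.card E = p ^ n}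

/-- The rank of a group: the maximum of the `p`-ranks over all primes `p`. -/
noncomputable def groupRank (G : Type*) [Group G] : ℕ :=
  sSup {n | ∃ p : ℕ, p.Prime ∧ n = pRank p G}

theorem stmt_7 {p : ℕ} [Fact p.Prime] {G : Type} [Group G] [Fintype G]
    (n : ℕ) (hrkG : groupRank G = n) (hrkp : pRank p G = n)
    (hdvd : p ∣ Nat.card G) (Gp : Sylow p G)
    (H : Subgroup Gp) (hHZ : H ≤ Subgroup.center Gp) (hH : H ≠ ⊥)
    -- `H` is strongly closed in `G_p` with respect to `G`
    (hsc : ∀ g : G, ∀ h : Gp, h ∈ H → g * ↑h * g⁻¹ ∈ (Gp : Subgroup G) →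
      ∃ h' : Gp, h' ∈ H ∧ (h' : G) = g * ↑h * g⁻¹) :
    -- `K = Ω₁(H)` and `φ = Ind_K^{G_p}(ρ_K - 1_K)`, where `ρ_K - 1_K` is the class
    -- function on `G_p` supported on `K` with value `|K| - 1` at `1` and `-1` on
    -- nontrivial elements of `K`, and `Ind` is given by the induced-character formula
    ∀ (K : Subgroup Gp), K = Omega1 p H →
    ∀ (φ : Gp → ℂ), (φ = fun g => (Nat.card K : ℂ)⁻¹ *
      ∑ x : Gp, (if x * g * x⁻¹ ∈ K then
        (if x * g * x⁻¹ = 1 then (Nat.card K : ℂ) else 0) - 1 else 0)) →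
    -- (1) `φ` respects fusion in `G`
    ((∀ h k : Gp, (∃ g : G, g * ↑h * g⁻¹ = ↑k) → φ h = φ k) ∧
    -- (2) `[φ|_E, 1_E] = 0` for every rank-`n` elementary abelian `E ⊆ G_p`
    (∀ E : Subgroup Gp, IsElementaryAbelian p E → Nat.card E = p ^ n →
      (Nat.card E : ℂ)⁻¹ * ∑ e : E, φ ↑e = 0)) := by
  intro K hKdef φ hφdef
  have hp1 : 1 < p := (Fact.out : p.Prime).one_lt
  have hcomm : ∀ a : Gp, a ∈ H → ∀ b : Gp, Commute a b := fun a ha b =>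
    ((Subgroup.mem_center_iff.mp (hHZ ha)) b).symm
  -- membership in `K`
  have hmem : ∀ g : Gp, g ∈ K ↔ g ∈ H ∧ g ^ p = 1 := by
    intro g
    constructor
    · intro hg
      rw [hKdef] at hg
      refine Subgroup.closure_induction (fun x hx => hx) ⟨H.one_mem, one_pow p⟩
        ?_ ?_ hg
      · intro a b _ _ ha hb
        exact ⟨H.mul_mem ha.1 hb.1, by
          rw [Commute.mul_pow (hcomm a ha.1 b), ha.2, hb.2, one_mul]⟩
      · intro a _ ha
        exact ⟨H.inv_mem ha.1, by rw [inv_pow, ha.2, inv_one]⟩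
    · intro hg
      rw [hKdef]
      exact Subgroup.subset_closure hg
  have hKH : ∀ g : Gp, g ∈ K → g ∈ H := fun g hg => ((hmem g).1 hg).1
  have hfix : ∀ x g : Gp, g ∈ K → x * g * x⁻¹ = g := fun x g hg => by
    rw [(hcomm g (hKH g hg) x).symm.eq, mul_inv_cancel_right]
  have hconj_mem : ∀ x g : Gp, x * g * x⁻¹ ∈ K → g ∈ K := by
    intro x g h
    have h2 := hfix x⁻¹ _ h
    have h3 : x⁻¹ * (x * g * x⁻¹) * x⁻¹⁻¹ = g := by group
    rw [h3] at h2
    rw [← h2] at h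
    exact h
  -- simplification of φ
  have hφψ : ∀ g : Gp, φ g = (Nat.card K : ℂ)⁻¹ * (Fintype.card Gp : ℂ) *
      (if g ∈ K then ((if g = 1 then (Nat.card K : ℂ) else 0) - 1) else 0) := by
    intro g
    rw [hφdef]
    have hterm : ∀ x : Gp, (if x * g * x⁻¹ ∈ K then
        (if x * g * x⁻¹ = 1 then (Nat.card K : ℂ) else 0) - 1 else 0) =
        (if g ∈ K then ((if g = 1 then (Nat.card K : ℂ) else 0) - 1) else 0) := by
      intro x
      by_cases hg : g ∈ K
      · rw [hfix x g hg]
      · rw [if_neg hg, if_neg (fun h => hg (hconj_mem x g h))]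
    simp only [hterm, Finset.sum_const, Finset.card_univ, nsmul_eq_mul]
    ring
  constructor
  · -- (1) fusion
    rintro h k ⟨g, hg⟩
    have key : ∀ (g : G) (a b : Gp), g * ↑a * g⁻¹ = ↑b → a ∈ K → b ∈ K := by
      intro g a b hab ha
      obtain ⟨haH, hap⟩ := (hmem a).1 ha
      obtain ⟨h', hh'H, hh'⟩ := hsc g a haH (by rw [hab]; exact b.2)
      have hb : h' = b := Subtype.coe_injective (show (h' : G) = (b : G) by
        rw [hh', hab])
      refine (hmem b).2 ⟨hb ▸ hh'H, ?_⟩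
      have hcoe : ((b : G)) ^ p = 1 := by
        rw [← hab]
        have ha' : ((a : G)) ^ p = 1 := by
          have : ((a ^ p : Gp) : G) = ((1 : Gp) : G) := by rw [hap]
          simpa using this
        calc (g * ↑a * g⁻¹) ^ p = g * (↑a : G) ^ p * g⁻¹ := by
              rw [← MulAut.conj_apply, ← map_pow, MulAut.conj_apply]
          _ = 1 := by rw [ha']; group
      have : ((b ^ p : Gp) : G) = ((1 : Gp) : G) := by simpa using hcoe
      exact Subtype.coe_injective this
    have hmemiff : h ∈ K ↔ k ∈ K := by
      constructor
      · exact key g h k hg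
      · refine key g⁻¹ k h ?_
        rw [← hg]; group
    have honeiff : (h = 1) ↔ (k = 1) := by
      constructor
      · intro h1
        have : (k : G) = 1 := by rw [← hg, h1]; simp
        exact OneMemClass.coe_eq_one.mp this
      · intro k1
        have : (h : G) = 1 := by
          have : g * (h : G) * g⁻¹ = 1 := by rw [hg, k1]; simp
          have := congrArg (fun z => g⁻¹ * z * g) this
          simpa [mul_assoc] using this
        exact OneMemClass.coe_eq_one.mp this
    rw [hφψ h, hφψ k]
    simp only [hmemiff, honeiff]
  · -- (2)
    intro E hE hcardE
    -- K ≤ E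
    have hKE : K ≤ E := by
      by_contra hnot
      obtain ⟨x, hxK, hxE⟩ := SetLike.not_le_iff_exists.mp hnot
      have hKnormal : K.Normal := ⟨fun n hn g => by rw [hfix g n hn]; exact hn⟩
      have hmemJ : ∀ a : Gp, a ∈ K ⊔ E → ∃ k ∈ K, ∃ e ∈ E, a = k * e := by
        intro a ha
        have hmul : a ∈ ((K : Set Gp) * (E : Set Gp)) := by
          rw [← Subgroup.normal_mul]; exact ha
        obtain ⟨k, hk, e, he, hke⟩ := hmul
        exact ⟨k, hk, e, he, hke.symm⟩
      have hJcomm : ∀ a ∈ K ⊔ E, ∀ b ∈ K ⊔ E, a * b = b * a := by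
        intro a ha b hb
        obtain ⟨k1, hk1, e1, he1, rfl⟩ := hmemJ a ha
        obtain ⟨k2, hk2, e2, he2, rfl⟩ := hmemJ b hb
        have A : Commute k1 (k2 * e2) := hcomm k1 (hKH _ hk1) _
        have B : Commute e1 k2 := (hcomm k2 (hKH _ hk2) e1).symm
        have C : Commute e1 e2 := hE.1 e1 he1 e2 he2
        exact (A.mul_left (B.mul_right C)).eq
      have hJexp : ∀ a ∈ K ⊔ E, a ^ p = 1 := by
        intro a ha
        obtain ⟨k, hk, e, he, rfl⟩ := hmemJ a ha
        rw [Commute.mul_pow (hcomm k (hKH _ hk) e), ((hmem k).1 hk).2,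
          hE.2 e he, one_mul]
      have hpJ : IsPGroup p (K ⊔ E : Subgroup Gp) := by
        intro a
        refine ⟨1, ?_⟩
        rw [pow_one]
        have := hJexp (a : Gp) a.2
        exact_mod_cast this
      obtain ⟨m, hm⟩ := IsPGroup.iff_card.mp hpJ
      have hEJ : E ≤ K ⊔ E := le_sup_right
      have hlt : Nat.card E < Nat.card (K ⊔ E : Subgroup Gp) := by
        rcases lt_or_eq_of_le (Subgroup.card_le_of_le hEJ) with h | h
        · exact h
        · exact absurd ((Subgroup.eq_of_le_of_card_ge hEJ h.ge) ▸
            (le_sup_left (a := K) (b := E) hxK)) hxE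
      have hnm : n < m := by
        rw [hcardE, hm] at hlt
        exact (Nat.pow_lt_pow_iff_right hp1).mp hlt
      have hmmem : m ∈ {k | ∃ E' : Subgroup G,
          IsElementaryAbelian p E' ∧ Nat.card E' = p ^ k} := by
        refine ⟨(K ⊔ E : Subgroup Gp).map (Gp : Subgroup G).subtype, ⟨?_, ?_⟩, ?_⟩
        · rintro x ⟨a, ha, rfl⟩ y ⟨b, hb, rfl⟩
          rw [← map_mul, ← map_mul, hJcomm a ha b hb]
        · rintro x ⟨a, ha, rfl⟩
          rw [← map_pow, hJexp a ha, map_one]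
        · rw [← Nat.card_congr ((K ⊔ E : Subgroup Gp).equivMapOfInjective _
            (Subgroup.subtype_injective _)).toEquiv]
          exact hm
      have hbdd : BddAbove {k | ∃ E' : Subgroup G,
          IsElementaryAbelian p E' ∧ Nat.card E' = p ^ k} := by
        refine ⟨Nat.card G, ?_⟩
        rintro k ⟨E', _, hE'⟩
        have h1 : p ^ k ≤ Nat.card G := hE' ▸ Subgroup.card_le_card_group E'
        exact le_trans (Nat.lt_pow_self hp1 : k < p ^ k).le h1
      have hmn : m ≤ n := hrkp ▸ le_csSup hbdd hmmem
      exact absurd hnm (not_lt.mpr hmn)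
    -- the sum vanishes
    have hsum : ∑ e : E, φ ↑e = 0 := by
      have hre : ∀ e : E, φ ↑e = (Nat.card K : ℂ)⁻¹ * (Fintype.card Gp : ℂ) *
          (if (e : Gp) ∈ K then ((if (e : Gp) = 1 then (Nat.card K : ℂ) else 0) - 1)
            else 0) := fun e => hφψ ↑e
      rw [Finset.sum_congr rfl fun e _ => hre e, ← Finset.mul_sum]
      have step : ∀ e : E, (if (e : Gp) ∈ K then
          ((if (e : Gp) = 1 then (Nat.card K : ℂ) else 0) - 1) else 0) =
          (if (e : Gp) = 1 then (Nat.card K : ℂ) else 0) -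
          (if (e : Gp) ∈ K then (1 : ℂ) else 0) := by
        intro e
        by_cases hK' : (e : Gp) ∈ K
        · simp [hK']
        · have h1 : (e : Gp) ≠ 1 := fun h => hK' (h ▸ K.one_mem)
          simp [hK', h1]
      rw [Finset.sum_congr rfl fun e _ => step e, Finset.sum_sub_distrib]
      have s1 : ∑ e : E, (if (e : Gp) = 1 then (Nat.card K : ℂ) else 0) =
          (Nat.card K : ℂ) := by
        simp [OneMemClass.coe_eq_one, Finset.sum_ite_eq']
      have s2 : ∑ e : E, (if (e : Gp) ∈ K then (1 : ℂ) else 0) =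
          (Nat.card K : ℂ) := by
        rw [Finset.sum_boole]
        congr 1
        have : (Finset.univ.filter (fun e : E => (e : Gp) ∈ K)).card = Nat.card K := by
          rw [← Fintype.card_subtype, Nat.card_eq_fintype_card]
          exact Fintype.card_congr
            ⟨fun z => ⟨z.1, z.2⟩, fun k => ⟨⟨(k : Gp), hKE k.2⟩, k.2⟩,
              fun z => by ext; rfl, fun k => by ext; rfl⟩
        rw [this]
      rw [s1, s2, sub_self, mul_zero]
    rw [hsum, mul_zero]
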